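/- Let r_b, r_γ ≥ 1, let d be a positive integer, 0 < ε < 1, and let H be an r_γ-uniform hypergraph with Turán density zero. Then there exist constants K_1 = K_1(r_b,r_γ,d,ε,H) and K_2 = K_2(r_b,r_γ,d,ε,H) such that the following holds. Let (B, γ, F) be any fiber bundle in which every edge of B has size between 1 and r_b, dim_H(B, γ, F) < d, and for all b ∈ V(B), γ(b) is an r_γ-uniform hypergraph with |γ(b)| ≥ ε·C(|F|, r_γ). Let A be the set of edges of B of size 1. If |F| ≥ K_1, then |A| ≤ K_2 and χ(B − A) ≤ K_2, where B − A is the hypergraph B with the edges in A removed. -/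

import Mathlib

open Finset

/-- `A` embeds into `B` (i.e. `B` contains a copy of `A`). -/
def Embeds {α β : Type} [DecidableEq β] (A : Finset (Finset α)) (B : Finset (Finset β)) : Prop :=
  ∃ f : α → β, Function.Injective f ∧ ∀ e ∈ A, e.image f ∈ B

/-- The chromatic number of the hypergraph with edge set `A` is at most `K`. -/
def ChromAtMost {α : Type} (A : Finset (Finset α)) (K : ℕ) : Prop :=
  ∃ f : α → Fin K, ∀ e ∈ A, ∃ x ∈ e, ∃ y ∈ e, f x ≠ f y

/-- The Turán number `ex(N, H)` for `r`-uniform hypergraphs on `N` vertices. -/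
noncomputable def exNum {α : Type} (r : ℕ) (H : Finset (Finset α)) (N : ℕ) : ℕ :=
  sSup {c : ℕ | ∃ G : Finset (Finset (Fin N)),
    (∀ e ∈ G, e.card = r) ∧ ¬ Embeds H G ∧ G.card = c}

/-- The section of a set `X` of base vertices in the fiber bundle with fibers `γ`. -/
def sectionOf {V F : Type} [Fintype F] [DecidableEq F]
    (γ : V → Finset (Finset F)) (X : Finset V) : Finset (Finset F) :=
  Finset.univ.filter (fun e => ∀ x ∈ X, e ∈ γ x)

/-- `dim_H(B, γ, F) ≥ d`. -/
def HasBundleDim {V F α : Type} [DecidableEq V] [Fintype F] [DecidableEq F]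
    (BE : Finset (Finset V)) (γ : V → Finset (Finset F))
    (H : Finset (Finset α)) (d : ℕ) : Prop :=
  ∃ M : Finset (Finset V), M.card = d ∧ (∀ e ∈ M, e ∈ BE) ∧
    (∀ e₁ ∈ M, ∀ e₂ ∈ M, e₁ ≠ e₂ → Disjoint e₁ e₂) ∧
    ∀ sel : Finset V → V, (∀ e ∈ M, sel e ∈ e) →
      Embeds H (sectionOf γ (M.image sel))

lemma embeds_mono {α β : Type} [DecidableEq β] {A : Finset (Finset α)} {G G' : Finset (Finset β)}
    (hGG : G ⊆ G') (h : Embeds A G) : Embeds A G' := by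
  obtain ⟨f, hf, he⟩ := h
  exact ⟨f, hf, fun e heA => hGG (he e heA)⟩

lemma mem_sectionOf {V F : Type} [Fintype F] [DecidableEq F]
    {γ : V → Finset (Finset F)} {X : Finset V} {u : Finset F} :
    u ∈ sectionOf γ X ↔ ∀ x ∈ X, u ∈ γ x := by
  simp [sectionOf]

lemma sectionOf_anti {V F : Type} [Fintype F] [DecidableEq F]
    (γ : V → Finset (Finset F)) {X Y : Finset V} (h : X ⊆ Y) :
    sectionOf γ Y ⊆ sectionOf γ X := by
  intro u hu
  rw [mem_sectionOf] at *
  exact fun x hx => hu x (h hx)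

lemma nat_block_lt {g a i j r : ℕ} (hij : i < j) (hr : r < g) :
    a + i * g + r < a + j * g := by
  have h1 : i + 1 ≤ j := hij
  have h2 : (i + 1) * g ≤ j * g := Nat.mul_le_mul_right g h1
  have h3 : i * g + r < (i + 1) * g := by
    rw [Nat.succ_mul]; omega
  omega

lemma nat_block_ne {g a i j r r' : ℕ} (hij : i ≠ j) (hr : r < g) (hr' : r' < g) :
    a + i * g + r ≠ a + j * g + r' := by
  rcases Nat.lt_or_ge i j with h | h
  · have := nat_block_lt (a := a) h hr
    omega
  · rcases Nat.lt_or_ge j i with h2 | h2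
    · have := nat_block_lt (a := a) h2 hr'
      omega
    · omega

lemma eta_lb {ε η T c : ℝ} (hε0 : 0 < ε) (hε1 : ε < 1) (hT0 : 0 < T)
    (h1 : η * T ≤ c) (h2 : c ≤ T * (1 - (2/ε) * (ε - η))) : ε/2 ≤ η := by
  have hA : η * T ≤ T * (1 - (2/ε) * (ε - η)) := le_trans h1 h2
  have hB : η ≤ 1 - (2/ε) * (ε - η) :=
    (mul_le_mul_iff_of_pos_right hT0).mp (by linarith : η * T ≤ (1 - (2/ε) * (ε - η)) * T)
  have hC : ε * ((2/ε) * (ε - η)) = 2 * (ε - η) := by field_simp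
  have hD : ε * η ≤ ε * (1 - (2/ε) * (ε - η)) :=
    mul_le_mul_of_nonneg_left hB (le_of_lt hε0)
  have hE : ε ≤ η * (2 - ε) := by nlinarith
  have hη0 : 0 < η := by nlinarith
  nlinarith

set_option maxHeartbeats 1000000 in
lemma main_induction
    (rb rγ d : ℕ) (hd : 0 < d)
    (ε : ℝ) (hε0 : 0 < ε) (hε1 : ε < 1)
    (mh : ℕ) (H : Finset (Finset (Fin mh)))
    (nb nf : ℕ) (BE : Finset (Finset (Fin nb)))
    (γ : Fin nb → Finset (Finset (Fin nf)))
    (hBE : ∀ e ∈ BE, 1 ≤ e.card ∧ e.card ≤ rb)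
    (hunif : ∀ b, ∀ e ∈ γ b, e.card = rγ)
    (hdim : ¬ HasBundleDim BE γ H d)
    (hT : 1 ≤ (nf.choose rγ : ℝ))
    (hEmb : ∀ G : Finset (Finset (Fin nf)), (∀ e ∈ G, e.card = rγ) →
        (ε/2)^(d+1) * (nf.choose rγ : ℝ) ≤ (G.card : ℝ) → Embeds H G) :
    ∀ k : ℕ, ∀ (𝒰 : Finset (Finset (Fin nf))) (η : ℝ) (V' : Finset (Fin nb)),
      (∀ y ∈ V', η * (nf.choose rγ : ℝ) ≤ (((γ y) ∩ 𝒰).card : ℝ)) →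
      ((𝒰.card : ℝ) ≤ (nf.choose rγ : ℝ) * (1 - (2/ε) * (ε - η))) →
      ((𝒰.card : ℝ) ≤ (ε/2) * (nf.choose rγ : ℝ) + (k : ℝ) * ((ε/2)^d * (nf.choose rγ : ℝ))) →
      (∃ f : Fin nb → ℕ,
          (∀ z, f z < (d*rb + 1 + 2^(2^(d*rb)))^(k+1)) ∧
          (∀ e ∈ BE, e ⊆ V' → 2 ≤ e.card → ∃ x ∈ e, ∃ y ∈ e, f x ≠ f y)) ∧
      (V'.filter (fun y => ({y} : Finset (Fin nb)) ∈ BE)).card ≤ (d*rb + 1 + 2^(2^(d*rb)))^(k+1) := by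
  classical
  set T : ℝ := (nf.choose rγ : ℝ) with hTdef
  set P : ℕ := 2^(2^(d*rb)) with hPdef
  set Cb : ℕ := d*rb + 1 + P with hCbdef
  have hT0 : (0:ℝ) < T := by linarith
  have hCb1 : 1 ≤ Cb := le_trans (Nat.le_add_left 1 (d*rb)) (Nat.le_add_right (d*rb+1) P)
  have hε2pos : (0:ℝ) < ε/2 := by linarith
  have hε2lt1 : ε/2 ≤ 1 := by linarith
  intro k
  induction k using Nat.strong_induction_on with
  | _ k IH =>
  intro 𝒰 η V' inv1 inv2 inv3
  by_cases hV : V'.Nonempty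
  swap
  · rw [not_nonempty_iff_eq_empty] at hV
    subst hV
    constructor
    · refine ⟨fun _ => 0, fun z => Nat.one_le_pow _ _ (by omega), ?_⟩
      intro e _ heV hcard
      have : e = ∅ := subset_empty.mp heV
      subst this; simp at hcard
    · simp
  obtain ⟨y₀, hy₀⟩ := hV
  -- basic density bounds
  have hUlb : η * T ≤ (𝒰.card : ℝ) := by
    refine le_trans (inv1 y₀ hy₀) ?_
    exact_mod_cast Nat.cast_le.mpr (card_le_card (inter_subset_right))
  have hηlb : ε/2 ≤ η := eta_lb hε0 hε1 hT0 hUlb inv2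
  -- the system predicate
  set Sys : ℕ → Prop := fun j => ∃ M : Finset (Finset (Fin nb)), M.card = j ∧
      (∀ e ∈ M, e ∈ BE) ∧
      (∀ e₁ ∈ M, ∀ e₂ ∈ M, e₁ ≠ e₂ → Disjoint e₁ e₂) ∧
      (∀ sel : Finset (Fin nb) → Fin nb, (∀ e ∈ M, sel e ∈ e) →
        (ε/2)^(j+1) * T ≤ (((𝒰 ∩ sectionOf γ (M.image sel))).card : ℝ)) with hSysdef
  have hSys0 : Sys 0 := by
    refine ⟨∅, by simp, by simp, by simp, ?_⟩
    intro sel _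
    have : (∅ : Finset (Finset (Fin nb))).image sel = ∅ := image_empty _
    rw [this]
    have hsect : sectionOf γ (∅ : Finset (Fin nb)) = Finset.univ := by
      ext u; simp [sectionOf]
    rw [hsect, inter_univ]
    have : (ε/2)^(0+1) * T = (ε/2) * T := by ring
    rw [this]
    calc (ε/2) * T ≤ η * T := by nlinarith
    _ ≤ (𝒰.card : ℝ) := hUlb
  have hSysd : ¬ Sys d := by
    intro ⟨M, hMcard, hMBE, hMdisj, hMdens⟩
    apply hdim
    refine ⟨M, hMcard, hMBE, hMdisj, ?_⟩
    intro sel hsel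
    have hMne : M.Nonempty := by
      rw [← card_pos, hMcard]; exact hd
    obtain ⟨e₀, he₀⟩ := hMne
    have hGunif : ∀ e ∈ 𝒰 ∩ sectionOf γ (M.image sel), e.card = rγ := by
      intro e he
      have h2 := (mem_inter.mp he).2
      rw [mem_sectionOf] at h2
      exact hunif (sel e₀) e (h2 (sel e₀) (mem_image_of_mem sel he₀))
    have hGcard := hMdens sel hsel
    have := hEmb _ hGunif hGcard
    exact embeds_mono inter_subset_right this
  -- extract the maximal system level s
  have hex : ∃ j, ¬ Sys j := ⟨d, hSysd⟩
  set j₀ := Nat.find hex with hj₀def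
  have hj₀pos : 0 < j₀ := by
    rcases Nat.eq_zero_or_pos j₀ with h | h
    · exact absurd hSys0 (h ▸ Nat.find_spec hex)
    · exact h
  have hj₀le : j₀ ≤ d := Nat.find_le hSysd
  set s := j₀ - 1 with hsdef
  have hsd : s < d := by omega
  have hSyss : Sys s := not_not.mp (Nat.find_min hex (by omega : s < j₀))
  have hnotsucc : ¬ Sys (s+1) := by
    have : s + 1 = j₀ := by omega
    rw [this]; exact Nat.find_spec hex
  obtain ⟨M, hMcard, hMBE, hMdisj, hMdens⟩ := hSyss
  set X : Finset (Fin nb) := M.biUnion id with hXdef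
  have heX : ∀ e ∈ M, e ⊆ X := by
    intro e he z hz
    exact mem_biUnion.mpr ⟨e, he, hz⟩
  have hXcard : X.card ≤ d * rb := by
    calc X.card ≤ ∑ e ∈ M, (id e).card := card_biUnion_le
    _ ≤ M.card * rb := by
        rw [← smul_eq_mul]
        exact sum_le_card_nsmul M _ rb (fun e he => (hBE e (hMBE e he)).2)
    _ ≤ d * rb := Nat.mul_le_mul_right rb (by omega)
  set TX : Finset (Finset (Fin nb)) :=
    X.powerset.filter (fun t => ∀ e ∈ M, (t ∩ e).card ≤ 1) with hTXdef
  -- lower bound for sections over partial transversals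
  have Wlb : ∀ t ∈ TX, (ε/2)^(s+1) * T ≤ (((𝒰 ∩ sectionOf γ t)).card : ℝ) := by
    intro t ht
    have htX : t ⊆ X := mem_powerset.mp (mem_filter.mp ht).1
    have htM : ∀ e ∈ M, (t ∩ e).card ≤ 1 := (mem_filter.mp ht).2
    set sel : Finset (Fin nb) → Fin nb := fun e =>
      if h : (t ∩ e).Nonempty then h.choose
      else if h2 : e.Nonempty then h2.choose else y₀ with hseldef
    have hsel : ∀ e ∈ M, sel e ∈ e := by
      intro e he
      simp only [hseldef]
      by_cases h : (t ∩ e).Nonempty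
      · rw [dif_pos h]
        exact (mem_inter.mp h.choose_spec).2
      · rw [dif_neg h]
        have h2 : e.Nonempty := card_pos.mp (by have := (hBE e (hMBE e he)).1; omega)
        rw [dif_pos h2]
        exact h2.choose_spec
    have hsub : t ⊆ M.image sel := by
      intro x hx
      obtain ⟨e, he, hxe⟩ := mem_biUnion.mp (htX hx)
      have hne : (t ∩ e).Nonempty := ⟨x, mem_inter.mpr ⟨hx, hxe⟩⟩
      have hsx : sel e = x := by
        simp only [hseldef]
        rw [dif_pos hne]
        exact card_le_one.mp (htM e he) _ hne.choose_spec _ (mem_inter.mpr ⟨hx, hxe⟩)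
      exact mem_image.mpr ⟨e, he, hsx⟩
    refine le_trans (hMdens sel hsel) ?_
    exact Nat.cast_le.mpr (card_le_card (inter_subset_inter Subset.rfl (sectionOf_anti γ hsub)))
  -- the pattern function
  set p : Fin nb → Finset (Finset (Fin nb)) := fun z =>
    TX.filter (fun t => (((𝒰 ∩ sectionOf γ t) ∩ γ z).card : ℝ) < (ε/2)^(s+2) * T) with hpdef
  -- maximality: every available edge has a vertex with a nonempty pattern
  have EXT : ∀ E ∈ BE, E ⊆ V' → (∀ z ∈ E, z ∉ X) → ∃ z ∈ E, (p z).Nonempty := by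
    intro E hE hEV hEX
    by_contra hcon
    push_neg at hcon
    have hgood : ∀ z ∈ E, ∀ t ∈ TX,
        (ε/2)^(s+2) * T ≤ (((𝒰 ∩ sectionOf γ t) ∩ γ z).card : ℝ) := by
      intro z hz t ht
      by_contra hlt
      push_neg at hlt
      refine (not_nonempty_iff_eq_empty.mpr (hcon z hz)).elim ?_
      refine ⟨t, ?_⟩
      simp only [hpdef]
      exact mem_filter.mpr ⟨ht, hlt⟩
    have hEne : E.Nonempty := card_pos.mp (by have := (hBE E hE).1; omega)
    have hEM : E ∉ M := by
      intro hEM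
      obtain ⟨z, hz⟩ := hEne
      exact hEX z hz (heX E hEM hz)
    apply hnotsucc
    refine ⟨insert E M, ?_, ?_, ?_, ?_⟩
    · rw [card_insert_of_notMem hEM, hMcard]
    · intro e he
      rcases mem_insert.mp he with h | h
      · exact h ▸ hE
      · exact hMBE e h
    · intro e₁ h1 e₂ h2 hne
      rcases mem_insert.mp h1 with h1' | h1' <;> rcases mem_insert.mp h2 with h2' | h2'
      · exact absurd (h1'.trans h2'.symm) hne
      · subst h1'
        exact disjoint_left.mpr (fun z hz hz2 => hEX z hz (heX e₂ h2' hz2))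
      · subst h2'
        exact disjoint_right.mpr (fun z hz hz2 => hEX z hz (heX e₁ h1' hz2))
      · exact hMdisj e₁ h1' e₂ h2' hne
    · intro sel hsel
      have hselM : ∀ e ∈ M, sel e ∈ e := fun e he => hsel e (mem_insert_of_mem he)
      have htTX : M.image sel ∈ TX := by
        rw [hTXdef]
        refine mem_filter.mpr ⟨mem_powerset.mpr ?_, ?_⟩
        · intro x hx
          obtain ⟨e, he, rfl⟩ := mem_image.mp hx
          exact heX e he (hselM e he)
        · intro e he
          rw [card_le_one]
          intro a ha b hb
          obtain ⟨ha1, ha2⟩ := mem_inter.mp ha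
          obtain ⟨hb1, hb2⟩ := mem_inter.mp hb
          obtain ⟨ea, hea, rfl⟩ := mem_image.mp ha1
          obtain ⟨eb, heb, rfl⟩ := mem_image.mp hb1
          have hae : ea = e := by
            by_contra hne2
            exact (disjoint_left.mp (hMdisj ea hea e he hne2)) (hselM ea hea) ha2
          have hbe : eb = e := by
            by_contra hne2
            exact (disjoint_left.mp (hMdisj eb heb e he hne2)) (hselM eb heb) hb2
          rw [hae, hbe]
      have himg : (insert E M).image sel = insert (sel E) (M.image sel) := image_insert sel E M
      have hseteq : 𝒰 ∩ sectionOf γ (insert (sel E) (M.image sel)) =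
          (𝒰 ∩ sectionOf γ (M.image sel)) ∩ γ (sel E) := by
        ext u
        simp only [mem_inter, mem_sectionOf, mem_insert]
        constructor
        · rintro ⟨hu, hins⟩
          exact ⟨⟨hu, fun x hx => hins x (Or.inr hx)⟩, hins _ (Or.inl rfl)⟩
        · rintro ⟨⟨hu, ht'⟩, hsel'⟩
          refine ⟨hu, fun x hx => ?_⟩
          rcases hx with rfl | hx'
          · exact hsel'
          · exact ht' x hx'
      rw [himg, hseteq]
      have h22 : s + 1 + 1 = s + 2 := by omega
      rw [h22]
      exact hgood (sel E) (hsel E (mem_insert_self E M)) _ htTX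
  set Q : Finset (Finset (Finset (Fin nb))) := ((V' \ X).image p).erase ∅ with hQdef
  have hQcard : Q.card ≤ P := by
    have h1 : Q ⊆ TX.powerset := by
      intro q hq
      rw [hQdef] at hq
      obtain ⟨z, hz, rfl⟩ := mem_image.mp (mem_erase.mp hq).2
      rw [hpdef]
      exact mem_powerset.mpr (filter_subset _ _)
    have h2 : Q.card ≤ 2^TX.card := by
      calc Q.card ≤ TX.powerset.card := card_le_card h1
      _ = 2^TX.card := card_powerset TX
    have h3 : TX.card ≤ 2^X.card := by
      calc TX.card ≤ X.powerset.card := by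
            rw [hTXdef]; exact card_le_card (filter_subset _ _)
      _ = 2^X.card := card_powerset X
    rw [hPdef]
    calc Q.card ≤ 2^TX.card := h2
    _ ≤ 2^(2^X.card) := Nat.pow_le_pow_right (by omega) h3
    _ ≤ 2^(2^(d*rb)) := Nat.pow_le_pow_right (by omega) (Nat.pow_le_pow_right (by omega) hXcard)
  set cls : Finset (Finset (Fin nb)) → Finset (Fin nb) :=
    fun q => (V' \ X).filter (fun z => p z = q) with hclsdef
  -- children via induction hypothesis
  have hchild : ∀ q : Finset (Finset (Fin nb)), ∃ fc : Fin nb → ℕ,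
      (q.Nonempty → (cls q).Nonempty →
        ((∀ z, fc z < Cb^k) ∧
         (∀ e ∈ BE, e ⊆ cls q → 2 ≤ e.card → ∃ x ∈ e, ∃ y ∈ e, fc x ≠ fc y) ∧
         ((cls q).filter (fun z => ({z} : Finset (Fin nb)) ∈ BE)).card ≤ Cb^k)) := by
    intro q
    by_cases hq : q.Nonempty ∧ (cls q).Nonempty
    swap
    · exact ⟨fun _ => 0, fun h1 h2 => absurd ⟨h1, h2⟩ hq⟩
    obtain ⟨⟨t₀, ht₀q⟩, ⟨z₁, hz₁⟩⟩ := hq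
    have hz₁' := mem_filter.mp hz₁
    have ht₀pz : t₀ ∈ p z₁ := by rw [hz₁'.2]; exact ht₀q
    have ht₀TX : t₀ ∈ TX := by
      simp only [hpdef] at ht₀pz
      exact mem_of_mem_filter t₀ ht₀pz
    set W : Finset (Finset (Fin nf)) := 𝒰 ∩ sectionOf γ t₀ with hWdef
    set 𝒰' := 𝒰 \ W with hU'def
    have hWsub : W ⊆ 𝒰 := inter_subset_left
    have hWlb2 : (ε/2)^(s+1) * T ≤ (W.card : ℝ) := Wlb t₀ ht₀TX
    have hbad : ∀ z ∈ cls q, ((W ∩ γ z).card : ℝ) < (ε/2)^(s+2) * T := by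
      intro z hz
      have hpz : p z = q := (mem_filter.mp hz).2
      have ht₀pz2 : t₀ ∈ p z := by rw [hpz]; exact ht₀q
      simp only [hpdef] at ht₀pz2
      exact (mem_filter.mp ht₀pz2).2
    have hcard' : (𝒰'.card : ℝ) = (𝒰.card : ℝ) - (W.card : ℝ) := by
      rw [hU'def, card_sdiff_of_subset hWsub, Nat.cast_sub (card_le_card hWsub)]
    have inv1' : ∀ z ∈ cls q, (η - (ε/2)^(s+2)) * T ≤ ((γ z ∩ 𝒰').card : ℝ) := by
      intro z hz
      have hzV : z ∈ V' := (mem_sdiff.mp (mem_filter.mp hz).1).1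
      have hsplit : (γ z ∩ 𝒰).card ≤ (γ z ∩ 𝒰').card + (W ∩ γ z).card := by
        have hsub2 : γ z ∩ 𝒰 ⊆ (γ z ∩ 𝒰') ∪ (W ∩ γ z) := by
          intro u hu
          obtain ⟨hu1, hu2⟩ := mem_inter.mp hu
          by_cases hw : u ∈ W
          · exact mem_union_right _ (mem_inter.mpr ⟨hw, hu1⟩)
          · exact mem_union_left _ (mem_inter.mpr ⟨hu1, mem_sdiff.mpr ⟨hu2, hw⟩⟩)
        calc (γ z ∩ 𝒰).card ≤ ((γ z ∩ 𝒰') ∪ (W ∩ γ z)).card := card_le_card hsub2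
        _ ≤ _ := card_union_le _ _
      have h1 := inv1 z hzV
      have h2 := hbad z hz
      have h3 : ((γ z ∩ 𝒰).card:ℝ) ≤ ((γ z ∩ 𝒰').card:ℝ) + ((W ∩ γ z).card:ℝ) := by
        exact_mod_cast hsplit
      nlinarith [h1, h2, h3]
    have hlamrel : (2/ε) * (ε/2)^(s+2) = (ε/2)^(s+1) := by
      have hεne : ε ≠ 0 := ne_of_gt hε0
      rw [pow_succ]
      field_simp
    have inv2' : (𝒰'.card : ℝ) ≤ T * (1 - (2/ε) * (ε - (η - (ε/2)^(s+2)))) := by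
      rw [hcard']
      have hexp : T * (1 - (2/ε) * (ε - (η - (ε/2)^(s+2)))) =
          T * (1 - (2/ε)*(ε-η)) - T * ((2/ε) * (ε/2)^(s+2)) := by ring
      rw [hexp, hlamrel]
      have h5 : T * (ε/2)^(s+1) = (ε/2)^(s+1) * T := by ring
      linarith [inv2, hWlb2]
    have hρ : (ε/2)^d ≤ (ε/2)^(s+1) :=
      pow_le_pow_of_le_one (le_of_lt hε2pos) hε2lt1 (by omega : s+1 ≤ d)
    have hρT : (ε/2)^d * T ≤ (ε/2)^(s+1) * T :=
      mul_le_mul_of_nonneg_right hρ (le_of_lt hT0)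
    have hk1 : 1 ≤ k := by
      by_contra hk
      have hk0 : (k:ℝ) = 0 := by
        have : k = 0 := by omega
        rw [this]; norm_num
      have hz1cls := inv1' z₁ hz₁
      have hle1 : ((γ z₁ ∩ 𝒰').card : ℝ) ≤ (𝒰'.card:ℝ) :=
        Nat.cast_le.mpr (card_le_card inter_subset_right)
      have hη'lb : ε/2 ≤ η - (ε/2)^(s+2) :=
        eta_lb hε0 hε1 hT0 (le_trans hz1cls hle1) inv2'
      have hup : (𝒰'.card:ℝ) ≤ (ε/2)*T - (ε/2)^(s+1)*T := by
        rw [hcard']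
        rw [hk0] at inv3
        linarith [inv3, hWlb2]
      have hlow : (ε/2)*T ≤ (𝒰'.card:ℝ) := by
        have : (ε/2) * T ≤ (η - (ε/2)^(s+2)) * T :=
          mul_le_mul_of_nonneg_right hη'lb (le_of_lt hT0)
        linarith [hz1cls, hle1]
      have hpow : (0:ℝ) < (ε/2)^(s+1) * T := by positivity
      linarith
    have inv3' : (𝒰'.card:ℝ) ≤ (ε/2)*T + ((k-1:ℕ):ℝ) * ((ε/2)^d * T) := by
      rw [hcard']
      have hcast : ((k-1:ℕ):ℝ) = (k:ℝ) - 1 := by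
        rw [Nat.cast_sub hk1]; norm_num
      rw [hcast]
      linarith [inv3, hWlb2, hρT]
    have hIH := IH (k-1) (by omega) 𝒰' (η - (ε/2)^(s+2)) (cls q) inv1' inv2' inv3'
    rw [Nat.sub_add_cancel hk1] at hIH
    obtain ⟨⟨fcq, hfc1, hfc2⟩, hfc3⟩ := hIH
    exact ⟨fcq, fun _ _ => ⟨hfc1, hfc2, hfc3⟩⟩
  choose fc hfc using hchild
  -- the coloring
  set f : Fin nb → ℕ := fun z =>
    if z ∈ X then X.toList.idxOf z
    else if h : z ∈ V' ∧ (p z).Nonempty then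
      d*rb + 1 + (Q.toList.idxOf (p z)) * Cb^k + fc (p z) z
    else d*rb with hfdef
  have hg1 : 1 ≤ Cb^k := Nat.one_le_pow _ _ (by omega)
  have hCbk : d*rb + 1 + P * Cb^k ≤ Cb^(k+1) := by
    have h1 : Cb^(k+1) = (d*rb + 1 + P) * Cb^k := by
      rw [pow_succ]; ring
    have h2 : d*rb + 1 ≤ (d*rb + 1) * Cb^k := Nat.le_mul_of_pos_right _ (by omega)
    nlinarith [hg1]
  -- pattern membership facts
  have hmemQ : ∀ z ∈ V', z ∉ X → (p z).Nonempty → p z ∈ Q := by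
    intro z hz hzX hpz
    rw [hQdef]
    refine mem_erase.mpr ⟨?_, mem_image_of_mem p (mem_sdiff.mpr ⟨hz, hzX⟩)⟩
    exact nonempty_iff_ne_empty.mp hpz
  -- color bound
  have hfbound : ∀ z, f z < Cb^(k+1) := by
    intro z
    rw [hfdef]
    by_cases hzX : z ∈ X
    · simp only [hzX, if_true]
      have h1 : X.toList.idxOf z < X.toList.length := List.idxOf_lt_length_iff.mpr (mem_toList.mpr hzX)
      rw [length_toList] at h1
      have : d*rb < Cb^(k+1) := by
        have : Cb ≤ Cb^(k+1) := Nat.le_self_pow (Nat.succ_ne_zero k) Cb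
        omega
      omega
    · simp only [hzX, if_false]
      by_cases h : z ∈ V' ∧ (p z).Nonempty
      · rw [dif_pos h]
        have hpQ : p z ∈ Q := hmemQ z h.1 hzX h.2
        have hi : Q.toList.idxOf (p z) < Q.card := by
          rw [← length_toList]
          exact List.idxOf_lt_length_iff.mpr (mem_toList.mpr hpQ)
        have hfc : fc (p z) z < Cb^k := by
          obtain ⟨z', hz'⟩ := mem_image.mp (mem_erase.mp hpQ).2
          have hcls : (cls (p z)).Nonempty := ⟨z, by
            rw [hclsdef]; exact mem_filter.mpr ⟨mem_sdiff.mpr ⟨h.1, hzX⟩, rfl⟩⟩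
          exact ((hfc (p z)) h.2 hcls).1 z
        have : Q.toList.idxOf (p z) * Cb^k + fc (p z) z < P * Cb^k := by
          have h1 : Q.toList.idxOf (p z) + 1 ≤ P := by omega
          calc Q.toList.idxOf (p z) * Cb^k + fc (p z) z
              < (Q.toList.idxOf (p z) + 1) * Cb^k := by rw [Nat.succ_mul]; omega
          _ ≤ P * Cb^k := Nat.mul_le_mul_right _ h1
        omega
      · rw [dif_neg h]
        have : Cb ≤ Cb^(k+1) := Nat.le_self_pow (Nat.succ_ne_zero k) Cb
        omega
  -- non-monochromatic edges
  have hfX : ∀ x, x ∈ X → f x = X.toList.idxOf x := by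
    intro x hx
    simp only [hfdef]
    rw [if_pos hx]
  have hfP : ∀ z, z ∉ X → z ∈ V' → (p z).Nonempty →
      f z = d*rb + 1 + (Q.toList.idxOf (p z)) * Cb^k + fc (p z) z := by
    intro z h1 h2 h3
    simp only [hfdef]
    rw [if_neg h1, dif_pos ⟨h2, h3⟩]
  have hfE : ∀ z, z ∉ X → ¬(z ∈ V' ∧ (p z).Nonempty) → f z = d*rb := by
    intro z h1 h2
    simp only [hfdef]
    rw [if_neg h1, dif_neg h2]
  have hfcbnd : ∀ z, z ∉ X → z ∈ V' → (p z).Nonempty → fc (p z) z < Cb^k := by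
    intro z h1 h2 h3
    have hcls : (cls (p z)).Nonempty :=
      ⟨z, mem_filter.mpr ⟨mem_sdiff.mpr ⟨h2, h1⟩, rfl⟩⟩
    exact ((hfc (p z)) h3 hcls).1 z
  have hnonmono : ∀ e ∈ BE, e ⊆ V' → 2 ≤ e.card → ∃ x ∈ e, ∃ y ∈ e, f x ≠ f y := by
    intro e he heV hecard
    by_cases hex1 : ∃ x ∈ e, x ∈ X
    · obtain ⟨x, hxe, hxX⟩ := hex1
      obtain ⟨y, hye, hyx⟩ := Set.Nontrivial.exists_ne (Finset.one_lt_card_iff_nontrivial.mp (by omega : 1 < e.card)) x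
      refine ⟨x, hxe, y, hye, ?_⟩
      have hix : X.toList.idxOf x < X.card := by
        have h1 : X.toList.idxOf x < X.toList.length :=
          List.idxOf_lt_length_iff.mpr (mem_toList.mpr hxX)
        rwa [length_toList] at h1
      by_cases hyX : y ∈ X
      · rw [hfX x hxX, hfX y hyX]
        intro hiq
        exact hyx (((List.idxOf_inj (mem_toList.mpr hyX)).mp hiq.symm))
      · have hfy : d*rb ≤ f y := by
          by_cases h : y ∈ V' ∧ (p y).Nonempty
          · rw [hfP y hyX h.1 h.2]; omega
          · rw [hfE y hyX h]
        rw [hfX x hxX]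
        omega
    · push_neg at hex1
      obtain ⟨z₀, hz₀e, hpz₀⟩ := EXT e he heV hex1
      by_cases hall : ∀ z ∈ e, (p z).Nonempty
      · by_cases hsamep : ∀ z ∈ e, p z = p z₀
        · have hecls : e ⊆ cls (p z₀) := by
            intro z hz
            exact mem_filter.mpr ⟨mem_sdiff.mpr ⟨heV hz, hex1 z hz⟩, hsamep z hz⟩
          have hclsne : (cls (p z₀)).Nonempty := ⟨z₀, hecls hz₀e⟩
          obtain ⟨h1, h2, h3⟩ := hfc (p z₀) hpz₀ hclsne
          obtain ⟨x, hxe, y, hye, hxy⟩ := h2 e he hecls hecard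
          refine ⟨x, hxe, y, hye, ?_⟩
          rw [hfP x (hex1 x hxe) (heV hxe) (hall x hxe),
              hfP y (hex1 y hye) (heV hye) (hall y hye),
              hsamep x hxe, hsamep y hye]
          intro hcontra
          exact hxy (by omega)
        · push_neg at hsamep
          obtain ⟨z₁, hz₁e, hpz₁ne⟩ := hsamep
          refine ⟨z₁, hz₁e, z₀, hz₀e, ?_⟩
          rw [hfP z₁ (hex1 z₁ hz₁e) (heV hz₁e) (hall z₁ hz₁e),
              hfP z₀ (hex1 z₀ hz₀e) (heV hz₀e) hpz₀]
          have hq1 : p z₁ ∈ Q := hmemQ z₁ (heV hz₁e) (hex1 z₁ hz₁e) (hall z₁ hz₁e)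
          have hq0 : p z₀ ∈ Q := hmemQ z₀ (heV hz₀e) (hex1 z₀ hz₀e) hpz₀
          have hidx : Q.toList.idxOf (p z₁) ≠ Q.toList.idxOf (p z₀) := by
            intro hiq
            exact hpz₁ne ((List.idxOf_inj (mem_toList.mpr hq1)).mp hiq)
          have hb1 : fc (p z₁) z₁ < Cb^k :=
            hfcbnd z₁ (hex1 z₁ hz₁e) (heV hz₁e) (hall z₁ hz₁e)
          have hb0 : fc (p z₀) z₀ < Cb^k :=
            hfcbnd z₀ (hex1 z₀ hz₀e) (heV hz₀e) hpz₀
          exact nat_block_ne hidx hb1 hb0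
      · push_neg at hall
        obtain ⟨z₁, hz₁e, hz₁p⟩ := hall
        refine ⟨z₀, hz₀e, z₁, hz₁e, ?_⟩
        rw [hfP z₀ (hex1 z₀ hz₀e) (heV hz₀e) hpz₀,
            hfE z₁ (hex1 z₁ hz₁e) (fun hc => (not_nonempty_iff_eq_empty.mpr hz₁p) hc.2)]
        omega
  -- the count of singleton vertices
  have hcount : (V'.filter (fun y => ({y} : Finset (Fin nb)) ∈ BE)).card ≤ Cb^(k+1) := by
    have hsub : V'.filter (fun y => ({y} : Finset (Fin nb)) ∈ BE) ⊆
        X ∪ Q.biUnion (fun q => (cls q).filter (fun z => ({z} : Finset (Fin nb)) ∈ BE)) := by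
      intro y hy
      obtain ⟨hyV, hyBE⟩ := mem_filter.mp hy
      by_cases hyX : y ∈ X
      · exact mem_union_left _ hyX
      · have hpy : (p y).Nonempty := by
          obtain ⟨z, hz, hzp⟩ := EXT {y} hyBE (singleton_subset_iff.mpr hyV)
            (by simpa using hyX)
          rw [mem_singleton] at hz
          exact hz ▸ hzp
        refine mem_union_right _ (mem_biUnion.mpr ⟨p y, hmemQ y hyV hyX hpy, ?_⟩)
        exact mem_filter.mpr ⟨mem_filter.mpr ⟨mem_sdiff.mpr ⟨hyV, hyX⟩, rfl⟩, hyBE⟩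
    have hstep1 : (V'.filter (fun y => ({y} : Finset (Fin nb)) ∈ BE)).card ≤
        X.card + (Q.biUnion (fun q => (cls q).filter (fun z => ({z} : Finset (Fin nb)) ∈ BE))).card :=
      le_trans (card_le_card hsub) (card_union_le _ _)
    have hstep2 : (Q.biUnion (fun q => (cls q).filter (fun z => ({z} : Finset (Fin nb)) ∈ BE))).card ≤
        Q.card * Cb^k := by
      refine le_trans card_biUnion_le ?_
      rw [← smul_eq_mul]
      refine sum_le_card_nsmul _ _ _ ?_
      intro q hq
      have hqne : q.Nonempty := nonempty_iff_ne_empty.mpr (mem_erase.mp hq).1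
      obtain ⟨z, hz, rfl⟩ := mem_image.mp (mem_erase.mp hq).2
      have hclsne : (cls (p z)).Nonempty := ⟨z, mem_filter.mpr ⟨hz, rfl⟩⟩
      exact ((hfc (p z)) hqne hclsne).2.2
    have hstep3 : Q.card * Cb^k ≤ P * Cb^k := Nat.mul_le_mul_right _ hQcard
    exact le_trans hstep1 (le_trans (Nat.add_le_add hXcard (le_trans hstep2 hstep3)) (by omega))
  exact ⟨⟨f, hfbound, hnonmono⟩, hcount⟩


/-- Theorem: coloring non-uniform fiber bundles. Let `H` be an `r_γ`-uniform hypergraph with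
Turán density zero. There are constants `K₁, K₂` such that for every fiber bundle whose base
edges have size between `1` and `r_b`, with `dim_H < d` and all fibers `r_γ`-uniform of size
at least `ε·C(|F|, r_γ)`: if `|F| ≥ K₁`, then the set `A` of base edges of size `1` has at
most `K₂` elements, and `χ(B − A) ≤ K₂`. -/
theorem fiber_bundle_coloring_with_singletons
    (rb rγ d : ℕ) (hrb : 1 ≤ rb) (hrγ : 1 ≤ rγ) (hd : 0 < d)
    (ε : ℝ) (hε0 : 0 < ε) (hε1 : ε < 1)
    (mh : ℕ) (H : Finset (Finset (Fin mh))) (hH : ∀ e ∈ H, e.card = rγ)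
    (hπ : Filter.Tendsto (fun N : ℕ => (exNum rγ H N : ℝ) / (N.choose rγ : ℝ))
      Filter.atTop (nhds 0)) :
    ∃ K₁ K₂ : ℕ, ∀ (nb nf : ℕ) (BE : Finset (Finset (Fin nb)))
      (γ : Fin nb → Finset (Finset (Fin nf))),
      (∀ e ∈ BE, 1 ≤ e.card ∧ e.card ≤ rb) →
      (∀ b : Fin nb, ∀ e ∈ γ b, e.card = rγ) →
      ¬ HasBundleDim BE γ H d →
      (∀ b : Fin nb, ε * (nf.choose rγ : ℝ) ≤ ((γ b).card : ℝ)) →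
      K₁ ≤ nf →
      (BE.filter (fun e => e.card = 1)).card ≤ K₂ ∧
      ChromAtMost (BE \ BE.filter (fun e => e.card = 1)) K₂ := by
  classical
  have hδ0 : (0:ℝ) < (ε/2)^(d+1) := by positivity
  have hev : ∀ᶠ N in Filter.atTop,
      (exNum rγ H N : ℝ) / (N.choose rγ : ℝ) < (ε/2)^(d+1) :=
    hπ.eventually (eventually_lt_nhds hδ0)
  obtain ⟨N₀, hN₀⟩ := Filter.eventually_atTop.mp hev
  refine ⟨max N₀ rγ, (d*rb + 1 + 2^(2^(d*rb)))^(⌈(2/ε)^d⌉₊+1), ?_⟩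
  intro nb nf BE γ hBE hunif hdim hdense hK1
  have hN₀nf : N₀ ≤ nf := le_trans (le_max_left _ _) hK1
  have hrγnf : rγ ≤ nf := le_trans (le_max_right _ _) hK1
  have hchoosepos : 0 < nf.choose rγ := Nat.choose_pos hrγnf
  have hT1 : (1:ℝ) ≤ (nf.choose rγ : ℝ) := by exact_mod_cast hchoosepos
  have hT0 : (0:ℝ) < (nf.choose rγ : ℝ) := by linarith
  have hEmb : ∀ G : Finset (Finset (Fin nf)), (∀ e ∈ G, e.card = rγ) →
      (ε/2)^(d+1) * (nf.choose rγ : ℝ) ≤ (G.card : ℝ) → Embeds H G := by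
    intro G hG hcard
    by_contra hnot
    have hmem : G.card ∈ {c : ℕ | ∃ G' : Finset (Finset (Fin nf)),
        (∀ e ∈ G', e.card = rγ) ∧ ¬ Embeds H G' ∧ G'.card = c} := ⟨G, hG, hnot, rfl⟩
    have hbdd : BddAbove {c : ℕ | ∃ G' : Finset (Finset (Fin nf)),
        (∀ e ∈ G', e.card = rγ) ∧ ¬ Embeds H G' ∧ G'.card = c} := by
      refine ⟨2^nf, ?_⟩
      rintro c ⟨G', -, -, rfl⟩
      calc G'.card ≤ (Finset.univ : Finset (Finset (Fin nf))).card := card_le_univ G'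
      _ = 2^nf := by rw [card_univ, Fintype.card_finset, Fintype.card_fin]
    have hle : G.card ≤ exNum rγ H nf := le_csSup hbdd hmem
    have hlt : (exNum rγ H nf : ℝ) < (ε/2)^(d+1) * (nf.choose rγ : ℝ) := by
      have h1 := hN₀ nf hN₀nf
      exact (div_lt_iff₀ hT0).mp h1
    have hcast : (G.card:ℝ) ≤ (exNum rγ H nf : ℝ) := Nat.cast_le.mpr hle
    linarith
  set 𝒰₀ : Finset (Finset (Fin nf)) :=
    Finset.univ.filter (fun u => u.card = rγ) with hU₀def
  have hU₀card : ((𝒰₀.card : ℝ)) = (nf.choose rγ : ℝ) := by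
    have heq : 𝒰₀ = Finset.powersetCard rγ (Finset.univ : Finset (Fin nf)) := by
      ext u
      simp [hU₀def, Finset.mem_powersetCard]
    rw [heq, card_powersetCard, card_univ, Fintype.card_fin]
  have inv1 : ∀ y ∈ (Finset.univ : Finset (Fin nb)),
      ε * (nf.choose rγ : ℝ) ≤ ((γ y ∩ 𝒰₀).card : ℝ) := by
    intro y _
    have hsubγ : γ y ⊆ 𝒰₀ := by
      intro u hu
      exact mem_filter.mpr ⟨mem_univ u, hunif y u hu⟩
    rw [inter_eq_left.mpr hsubγ]
    exact hdense y
  have inv2 : ((𝒰₀.card : ℝ)) ≤ (nf.choose rγ : ℝ) * (1 - (2/ε) * (ε - ε)) := by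
    rw [hU₀card]
    have : ε - ε = 0 := by ring
    rw [this]
    norm_num
  have inv3 : ((𝒰₀.card : ℝ)) ≤ (ε/2) * (nf.choose rγ : ℝ) +
      ((⌈(2/ε)^d⌉₊ : ℕ) : ℝ) * ((ε/2)^d * (nf.choose rγ : ℝ)) := by
    rw [hU₀card]
    have h1 : (2/ε)^d ≤ ((⌈(2/ε)^d⌉₊ : ℕ) : ℝ) := Nat.le_ceil _
    have h2 : (2/ε)^d * (ε/2)^d = 1 := by
      rw [← mul_pow]
      have : (2/ε) * (ε/2) = 1 := by field_simp
      rw [this, one_pow]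
    have h3 : (0:ℝ) ≤ (ε/2)^d * (nf.choose rγ : ℝ) := by positivity
    have h4 : 1 * (nf.choose rγ : ℝ) ≤
        ((⌈(2/ε)^d⌉₊ : ℕ) : ℝ) * ((ε/2)^d * (nf.choose rγ : ℝ)) := by
      calc 1 * (nf.choose rγ : ℝ) = ((2/ε)^d * (ε/2)^d) * (nf.choose rγ : ℝ) := by rw [h2]
      _ = (2/ε)^d * ((ε/2)^d * (nf.choose rγ : ℝ)) := by ring
      _ ≤ ((⌈(2/ε)^d⌉₊ : ℕ) : ℝ) * ((ε/2)^d * (nf.choose rγ : ℝ)) :=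
          mul_le_mul_of_nonneg_right h1 h3
    nlinarith [hT0, hε0]
  have hmain := main_induction rb rγ d hd ε hε0 hε1 mh H nb nf BE γ hBE hunif hdim hT1 hEmb
    ⌈(2/ε)^d⌉₊ 𝒰₀ ε Finset.univ inv1 inv2 inv3
  obtain ⟨⟨f, hfbnd, hfnm⟩, hcnt⟩ := hmain
  constructor
  · have hsub : BE.filter (fun e => e.card = 1) ⊆
        (Finset.univ.filter (fun y => ({y} : Finset (Fin nb)) ∈ BE)).image
          (fun y => ({y} : Finset (Fin nb))) := by
      intro e he'
      obtain ⟨heBE, hc1⟩ := mem_filter.mp he'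
      obtain ⟨a, rfl⟩ := card_eq_one.mp hc1
      exact mem_image_of_mem _ (mem_filter.mpr ⟨mem_univ a, heBE⟩)
    calc (BE.filter (fun e => e.card = 1)).card
        ≤ ((Finset.univ.filter (fun y => ({y} : Finset (Fin nb)) ∈ BE)).image
          (fun y => ({y} : Finset (Fin nb)))).card := card_le_card hsub
    _ ≤ (Finset.univ.filter (fun y => ({y} : Finset (Fin nb)) ∈ BE)).card := card_image_le
    _ ≤ _ := hcnt
  · refine ⟨fun z => ⟨f z, hfbnd z⟩, ?_⟩
    intro e he'
    obtain ⟨heBE, hne1⟩ := mem_sdiff.mp he'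
    have hcard2 : 2 ≤ e.card := by
      have h1 := (hBE e heBE).1
      have h2 : ¬(e.card = 1) := fun hc => hne1 (mem_filter.mpr ⟨heBE, hc⟩)
      omega
    obtain ⟨x, hxe, y, hye, hxy⟩ := hfnm e heBE (subset_univ e) hcard2
    exact ⟨x, hxe, y, hye, fun hc => hxy (by simpa using congrArg Fin.val hc)⟩
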